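/- Let p ≥ 1, let z_1, …, z_p be real numbers, let m_1, …, m_p be positive integers with m_1 + ⋯ + m_p = m, and let n be a natural number. Then ∑ (n!/(n_1!⋯n_p!)) · ∏_{j=1}^p (z_j)_{n_j + m_j - 1 ↑} = (∏_{j=1}^p (z_j)_{m_j - 1 ↑}) · (m + z_1 + ⋯ + z_p − p)_{n↑}, where the sum ranges over all p-tuples (n_1,…,n_p) of nonnegative integers with n_1 + ⋯ + n_p = n. -/

import Mathlib

/-- Generalized rising factorial `(x)_{n↑h} = ∏_{i=0}^{n-1} (x + i·h)`. -/
noncomputable def risefac (x h : ℝ) (n : ℕ) : ℝ := ∏ i ∈ Finset.range n, (x + i * h)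

lemma risefac_succ (x : ℝ) (n : ℕ) :
    risefac x 1 (n + 1) = risefac x 1 n * (x + n) := by
  simp [risefac, Finset.prod_range_succ]

lemma risefac_add (x : ℝ) (a b : ℕ) :
    risefac x 1 (a + b) = risefac x 1 a * risefac (x + a) 1 b := by
  induction b with
  | zero => simp [risefac]
  | succ b ih =>
    rw [← add_assoc, risefac_succ, ih, risefac_succ]
    push_cast
    ring

lemma risefac_vandermonde (x y : ℝ) (n : ℕ) :
    risefac (x + y) 1 n = ∑ p ∈ Finset.HasAntidiagonal.antidiagonal n,
      (n.choose p.1 : ℝ) * (risefac x 1 p.1 * risefac y 1 p.2) := by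
  induction n with
  | zero => simp [risefac]
  | succ n ih =>
    have key : ∀ p ∈ Finset.HasAntidiagonal.antidiagonal n,
        (n.choose p.1 : ℝ) * (risefac x 1 p.1 * risefac y 1 p.2) * (x + y + n)
        = (n.choose p.1 : ℝ) * (risefac x 1 (p.1 + 1) * risefac y 1 p.2)
          + (n.choose p.1 : ℝ) * (risefac x 1 p.1 * risefac y 1 (p.2 + 1)) := by
      rintro ⟨a, b⟩ hab
      have hn : a + b = n := Finset.HasAntidiagonal.mem_antidiagonal.mp hab
      rw [risefac_succ, risefac_succ, ← hn]
      push_cast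
      ring
    rw [risefac_succ, ih, Finset.sum_mul, Finset.sum_congr rfl key, Finset.sum_add_distrib]
    have e1 := Finset.Nat.sum_antidiagonal_succ (n := n)
      (f := fun p => (n.choose p.1 : ℝ) * (risefac x 1 p.1 * risefac y 1 p.2))
    have e2 := Finset.Nat.sum_antidiagonal_succ' (n := n)
      (f := fun p => (n.choose p.1 : ℝ) * (risefac x 1 p.1 * risefac y 1 p.2))
    simp only [Nat.choose_self, Nat.choose_succ_self, Nat.choose_zero_right, Nat.cast_one,
      Nat.cast_zero, zero_mul, zero_add, one_mul] at e1 e2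
    have h2 : ∑ p ∈ Finset.HasAntidiagonal.antidiagonal n,
          (n.choose p.1 : ℝ) * (risefac x 1 p.1 * risefac y 1 (p.2 + 1))
        = risefac x 1 0 * risefac y 1 (n + 1) + ∑ p ∈ Finset.HasAntidiagonal.antidiagonal n,
          (n.choose (p.1 + 1) : ℝ) * (risefac x 1 (p.1 + 1) * risefac y 1 p.2) := by
      rw [← e1, e2]
    rw [h2, Finset.Nat.sum_antidiagonal_succ
      (f := fun p => ((n + 1).choose p.1 : ℝ) * (risefac x 1 p.1 * risefac y 1 p.2))]
    simp only [Nat.choose_zero_right, Nat.cast_one, one_mul, Nat.choose_succ_succ, Nat.cast_add]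
    rw [Finset.sum_congr rfl (fun p _ => by ring :
      ∀ p ∈ Finset.HasAntidiagonal.antidiagonal n,
        ((n.choose p.1 : ℝ) + (n.choose (p.1 + 1) : ℝ)) * (risefac x 1 (p.1 + 1) * risefac y 1 p.2)
        = (n.choose p.1 : ℝ) * (risefac x 1 (p.1 + 1) * risefac y 1 p.2)
          + (n.choose (p.1 + 1) : ℝ) * (risefac x 1 (p.1 + 1) * risefac y 1 p.2)),
      Finset.sum_add_distrib]
    simp [risefac]
    ring

lemma risefac_multinomial {α : Type*} [DecidableEq α] (s : Finset α) (w : α → ℝ) (n : ℕ) :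
    risefac (∑ i ∈ s, w i) 1 n
      = ∑ k ∈ s.piAntidiag n, (Nat.multinomial s k : ℝ) * ∏ i ∈ s, risefac (w i) 1 (k i) := by
  induction s using Finset.cons_induction generalizing n with
  | empty =>
    cases n with
    | zero => simp [risefac]
    | succ n => simp [risefac, Finset.prod_range_succ']
  | cons a s has ih =>
    rw [Finset.sum_cons, risefac_vandermonde, Finset.piAntidiag_cons, Finset.sum_disjiUnion]
    refine Finset.sum_congr rfl fun p hp => ?_
    have hn : p.1 + p.2 = n := Finset.HasAntidiagonal.mem_antidiagonal.mp hp
    rw [Finset.sum_map, ih, Finset.mul_sum, Finset.mul_sum]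
    refine Finset.sum_congr rfl fun k hk => ?_
    rw [Finset.mem_piAntidiag] at hk
    have hka : k a = 0 := not_imp_comm.1 (hk.2 a) has
    have hks : ∑ i ∈ s, k i = p.2 := hk.1
    simp only [addRightEmbedding_apply]
    rw [Nat.multinomial_cons, Finset.prod_cons]
    have hga : (k + fun t => if t = a then p.1 else 0) a = p.1 := by simp [hka]
    have hgs : ∀ i ∈ s, (k + fun t => if t = a then p.1 else 0) i = k i := by
      intro i hi
      have : i ≠ a := ne_of_mem_of_not_mem hi has
      simp [this]
    rw [hga, Finset.sum_congr rfl hgs, hks, hn,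
      Nat.multinomial_congr hgs,
      show (∏ i ∈ s, risefac (w i) 1 ((k + fun t => if t = a then p.1 else 0) i))
          = ∏ i ∈ s, risefac (w i) 1 (k i) from
        Finset.prod_congr rfl fun i hi => by rw [hgs i hi]]
    push_cast
    ring

/-- For positive integers `m_1,…,m_p` with sum `m`:
`∑ (n!/(n_1!⋯n_p!)) ∏_j (z_j)_{n_j+m_j-1↑} = (∏_j (z_j)_{m_j-1↑}) · (m + z_1+⋯+z_p − p)_{n↑}`,
the sum over nonnegative tuples with `n_1 + ⋯ + n_p = n`. -/
theorem risefac_multinomial_shifted (p : ℕ) (hp : 1 ≤ p) (z : Fin p → ℝ)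
    (mvec : Fin p → ℕ) (hm : ∀ j, 0 < mvec j) (m : ℕ) (hmsum : ∑ j, mvec j = m) (n : ℕ) :
    ∑ f ∈ Finset.Nat.antidiagonalTuple p n,
        ((n.factorial : ℝ) / ∏ j, ((f j).factorial : ℝ)) *
          ∏ j, risefac (z j) 1 (f j + mvec j - 1)
      = (∏ j, risefac (z j) 1 (mvec j - 1)) * risefac ((m : ℝ) + (∑ j, z j) - p) 1 n := by
  classical
  set w : Fin p → ℝ := fun j => z j + ((mvec j : ℝ) - 1) with hw
  have hsumw : ∑ j, w j = (m : ℝ) + (∑ j, z j) - p := by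
    rw [hw]
    rw [Finset.sum_add_distrib, Finset.sum_sub_distrib]
    simp only [Finset.sum_const, Finset.card_univ, Fintype.card_fin, nsmul_eq_mul, mul_one]
    have : ((∑ j, mvec j : ℕ) : ℝ) = (m : ℝ) := by rw [hmsum]
    push_cast at this
    rw [this]
    ring
  have key := risefac_multinomial (Finset.univ : Finset (Fin p)) w n
  rw [Finset.piAntidiag_univ_fin_eq_antidiagonalTuple, hsumw] at key
  rw [key, Finset.mul_sum]

  refine Finset.sum_congr rfl fun f hf => ?_
  have hfs : ∑ j, f j = n := Finset.Nat.mem_antidiagonalTuple.mp hf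
  have hmult : ((Nat.multinomial Finset.univ f : ℕ) : ℝ)
      = (n.factorial : ℝ) / ∏ j, ((f j).factorial : ℝ) := by
    have hspec := Nat.multinomial_spec Finset.univ f
    rw [hfs] at hspec
    have hne : (∏ j, ((f j).factorial : ℝ)) ≠ 0 := by
      refine Finset.prod_ne_zero_iff.mpr fun j _ => ?_
      exact_mod_cast (f j).factorial_ne_zero
    field_simp
    rw [mul_comm]
    exact_mod_cast hspec
  have hterm : ∀ j : Fin p, risefac (z j) 1 (f j + mvec j - 1)
      = risefac (z j) 1 (mvec j - 1) * risefac (w j) 1 (f j) := by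
    intro j
    have hmj := hm j
    have h1 : f j + mvec j - 1 = (mvec j - 1) + f j := by omega
    have h2 : ((mvec j - 1 : ℕ) : ℝ) = (mvec j : ℝ) - 1 := by
      have := hm j
      push_cast [Nat.cast_sub this]
      ring
    rw [h1, risefac_add, hw, h2]
  rw [Finset.prod_congr rfl (fun j _ => hterm j), Finset.prod_mul_distrib, hmult]
  ring
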